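/- Let G = (V,E) be a finite simple graph, let α > 0, and let T₁, T₂ ⊆ V be disjoint sets with |T₁| = |T₂| = k. If S ⊆ V satisfies δ_G(S)/α + |T₁∖S| + |T₂∩S| < k, then ∅ ≠ S ⊊ V and φ_G(S) < α. -/
import Mathlib


/-- Edges of `G` with one endpoint in `S` and the other endpoint in `U \ S`:
the cut edges `∂(S)` of `S`, inside the subgraph of `G` induced by `U` (when `S ⊆ U`). -/
def cutEdgesIn {V : Type*} (G : SimpleGraph V) (U S : Set V) : Set (Sym2 V) :=
  {e | e ∈ G.edgeSet ∧ ∃ u v, e = s(u, v) ∧ u ∈ S ∧ v ∈ U ∧ v ∉ S}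

/-- `δ(S)`, the number of cut edges of `S` inside the subgraph induced by `U`. -/
noncomputable def deltaIn {V : Type*} (G : SimpleGraph V) (U S : Set V) : ℕ :=
  (cutEdgesIn G U S).ncard

/-- The expansion `φ(S)` of the cut `S` inside the subgraph of `G` induced by `U`. -/
noncomputable def phiIn {V : Type*} (G : SimpleGraph V) (U S : Set V) : ℝ :=
  (deltaIn G U S : ℝ) / min (S.ncard : ℝ) ((U \ S).ncard : ℝ)

/-- Let `T₁, T₂ ⊆ V` be disjoint with `|T₁| = |T₂| = k`. If `S ⊆ V` satisfies
`δ_G(S)/α + |T₁ ∖ S| + |T₂ ∩ S| < k` (its cut capacity in the flow network is less than `k`),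
then `S` is a nonempty proper `α`-sparse cut of `G`. -/
theorem stmt11 {V : Type*} [Fintype V] (G : SimpleGraph V) (α : ℝ) (hα : 0 < α)
    (k : ℕ) (T1 T2 : Set V) (hdisj : Disjoint T1 T2)
    (hT1 : T1.ncard = k) (hT2 : T2.ncard = k)
    (S : Set V)
    (hcap : (deltaIn G Set.univ S : ℝ) / α + ((T1 \ S).ncard : ℝ) +
        ((T2 ∩ S).ncard : ℝ) < (k : ℝ)) :
    S.Nonempty ∧ S ≠ Set.univ ∧ phiIn G Set.univ S < α := by
  have hδnn : (0:ℝ) ≤ (deltaIn G Set.univ S : ℝ) / α := div_nonneg (Nat.cast_nonneg _) hα.le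
  have h1 : (T1 ∩ S).ncard + (T1 \ S).ncard = k := by
    rw [Set.ncard_inter_add_ncard_diff_eq_ncard T1 S (Set.toFinite T1), hT1]
  have h2 : (T2 ∩ S).ncard + (T2 \ S).ncard = k := by
    rw [Set.ncard_inter_add_ncard_diff_eq_ncard T2 S (Set.toFinite T2), hT2]
  have h1' : ((T1 ∩ S).ncard : ℝ) + ((T1 \ S).ncard : ℝ) = k := by exact_mod_cast h1
  have h2' : ((T2 ∩ S).ncard : ℝ) + ((T2 \ S).ncard : ℝ) = k := by exact_mod_cast h2
  have hM : (0:ℝ) < ((T1 ∩ S).ncard : ℝ) - ((T2 ∩ S).ncard : ℝ) := by linarith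
  have hS1 : ((T1 ∩ S).ncard : ℝ) ≤ (S.ncard : ℝ) := by
    exact_mod_cast Set.ncard_le_ncard Set.inter_subset_right (Set.toFinite S)
  have hS2 : ((T2 \ S).ncard : ℝ) ≤ ((Set.univ \ S : Set V).ncard : ℝ) := by
    exact_mod_cast Set.ncard_le_ncard (Set.diff_subset_diff_left (Set.subset_univ T2))
      (Set.toFinite _)
  have hne : S.Nonempty := by
    have : (T1 ∩ S).Nonempty := by
      rw [Set.nonempty_iff_ne_empty]
      intro h
      rw [h, Set.ncard_empty] at hM
      simp only [Nat.cast_zero] at hM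
      have h3 : (0:ℝ) ≤ ((T2 ∩ S).ncard : ℝ) := Nat.cast_nonneg _
      linarith
    exact this.mono Set.inter_subset_right
  have hnu : S ≠ Set.univ := by
    have h2S : (T2 \ S).Nonempty := by
      rw [Set.nonempty_iff_ne_empty]
      intro h
      rw [h, Set.ncard_empty] at h2'
      simp only [Nat.cast_zero, add_zero] at h2'
      have h3 : (0:ℝ) ≤ ((T1 \ S).ncard : ℝ) := Nat.cast_nonneg _
      linarith
    obtain ⟨x, _, hx⟩ := h2S
    intro h
    exact hx (h ▸ Set.mem_univ x)
  refine ⟨hne, hnu, ?_⟩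
  have hmin : ((T1 ∩ S).ncard : ℝ) - ((T2 ∩ S).ncard : ℝ) ≤
      min (S.ncard : ℝ) ((Set.univ \ S : Set V).ncard : ℝ) := by
    apply le_min <;> linarith
  have hminpos : (0:ℝ) < min (S.ncard : ℝ) ((Set.univ \ S : Set V).ncard : ℝ) :=
    lt_of_lt_of_le hM hmin
  rw [phiIn, div_lt_iff₀ hminpos]
  have hδ : (deltaIn G Set.univ S : ℝ) < α * (((T1 ∩ S).ncard : ℝ) - ((T2 ∩ S).ncard : ℝ)) := by
    have h4 : (deltaIn G Set.univ S : ℝ) / α <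
        ((T1 ∩ S).ncard : ℝ) - ((T2 ∩ S).ncard : ℝ) := by linarith
    rw [div_lt_iff₀ hα] at h4
    nlinarith [h4]
  calc (deltaIn G Set.univ S : ℝ) < α * (((T1 ∩ S).ncard : ℝ) - ((T2 ∩ S).ncard : ℝ)) := hδ
    _ ≤ α * min (S.ncard : ℝ) ((Set.univ \ S : Set V).ncard : ℝ) :=
        mul_le_mul_of_nonneg_left hmin hα.le
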